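/- Let G be a directed multigraph with arcs labelled by Boolean literals or constants, and for an assignment α write u →_α v if there is a directed path from u to v all of whose arc labels evaluate to 1 under α. If B is the '2-SAT implication graph' of a degree-2 hypergraph program H (with vertices e_i^+, e_i^- for each hyperedge e_i, arcs (e_i^+, e_j^-) labelled 1 whenever e_i ∩ e_j ≠ ∅, and arcs (e_i^-, e_j^+) labelled ¬v for each vertex v ∈ e_i ∩ e_j), then for every assignment α: there is no independent set of hyperedges of H covering all zeros under α if and only if for some i both e_i^- →_α e_i^+ and e_i^+ →_α e_i^- hold in B. -/

import Mathlib

set_option linter.unusedSectionVars false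


inductive HGPLabel (α : Type) : Type
  | zero : HGPLabel α
  | one : HGPLabel α
  | pos (p : α) : HGPLabel α
  | neg (p : α) : HGPLabel α

def HGPLabel.eval {α : Type} (σ : α → Bool) : HGPLabel α → Bool
  | .zero => false
  | .one => true
  | .pos p => σ p
  | .neg p => !σ p

/-- One arc of the implication graph `B` of a degree-2 hypergraph program,
usable under the assignment `σ`: `(i, true)` is the node `e_i⁺` and
`(i, false)` the node `e_i⁻`; arcs `e_i⁺ → e_j⁻` (labelled 1) exist whenever
`e_i ∩ e_j ≠ ∅`, and arcs `e_i⁻ → e_j⁺` labelled `¬v` (usable iff the label of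
`v` evaluates to 0 under `σ`) exist for each `v ∈ e_i ∩ e_j`. -/
def impStep {V α : Type} {k : ℕ} (E : Fin k → Finset V) (lab : V → HGPLabel α)
    (σ : α → Bool) (x y : Fin k × Bool) : Prop :=
  (x.2 = true ∧ y.2 = false ∧ x.1 ≠ y.1 ∧ ∃ v : V, v ∈ E x.1 ∧ v ∈ E y.1) ∨
  (x.2 = false ∧ y.2 = true ∧ x.1 ≠ y.1 ∧
    ∃ v : V, v ∈ E x.1 ∧ v ∈ E y.1 ∧ (lab v).eval σ = false)

open Relation

section Aux

variable {V α : Type} [DecidableEq V] {k : ℕ} (E : Fin k → Finset V)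
  (lab : V → HGPLabel α) (σ : α → Bool)

lemma two_edges {v : V} (hdeg : (Finset.univ.filter (fun i => v ∈ E i)).card = 2) :
    ∃ i j : Fin k, i ≠ j ∧ v ∈ E i ∧ v ∈ E j ∧ ∀ m, v ∈ E m → m = i ∨ m = j := by
  rcases Finset.card_eq_two.mp hdeg with ⟨i, j, hij, hset⟩
  have hi : i ∈ Finset.univ.filter (fun m => v ∈ E m) := by rw [hset]; simp
  have hj : j ∈ Finset.univ.filter (fun m => v ∈ E m) := by rw [hset]; simp
  refine ⟨i, j, hij, (Finset.mem_filter.mp hi).2, (Finset.mem_filter.mp hj).2, fun m hm => ?_⟩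
  have : m ∈ Finset.univ.filter (fun m => v ∈ E m) := Finset.mem_filter.mpr ⟨Finset.mem_univ _, hm⟩
  rw [hset] at this
  simpa using this

lemma impStep_skew {x y : Fin k × Bool} (h : impStep E lab σ x y) :
    impStep E lab σ (y.1, !y.2) (x.1, !x.2) := by
  rcases h with ⟨hx, hy, hne, v, hv1, hv2⟩ | ⟨hx, hy, hne, v, hv1, hv2, hv3⟩
  · exact Or.inl ⟨by simp [hy], by simp [hx], hne.symm, v, hv2, hv1⟩
  · exact Or.inr ⟨by simp [hy], by simp [hx], hne.symm, v, hv2, hv1, hv3⟩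

lemma rtg_skew {x y : Fin k × Bool} (h : ReflTransGen (impStep E lab σ) x y) :
    ReflTransGen (impStep E lab σ) (y.1, !y.2) (x.1, !x.2) := by
  induction h with
  | refl => exact .refl
  | tail _ hstep ih => exact .head (impStep_skew E lab σ hstep) ih

lemma preserve (X : Finset (Fin k))
    (hdeg : ∀ v : V, (Finset.univ.filter (fun i => v ∈ E i)).card = 2)
    (hind : ∀ i ∈ X, ∀ j ∈ X, i ≠ j → Disjoint (E i) (E j))
    (hcov : ∀ v : V, (lab v).eval σ = false → ∃ i ∈ X, v ∈ E i)
    {x y : Fin k × Bool} (h : ReflTransGen (impStep E lab σ) x y)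
    (hx : x.1 ∈ X ↔ x.2 = true) : y.1 ∈ X ↔ y.2 = true := by
  induction h with
  | refl => exact hx
  | tail _ hstep ih =>
    rename_i b c _
    rcases hstep with ⟨hb, hc, hne, v, hv1, hv2⟩ | ⟨hb, hc, hne, v, hv1, hv2, hv3⟩
    · have hbX : b.1 ∈ X := ih.mpr hb
      rw [hc]
      simp only [Bool.false_eq_true, iff_false]
      intro hcX
      exact Finset.not_disjoint_iff.mpr ⟨v, hv1, hv2⟩ (hind _ hbX _ hcX hne)
    · have hbX : b.1 ∉ X := fun h => by simp [ih.mp h] at hb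
      rw [hc]
      simp only [iff_true]
      rcases hcov v hv3 with ⟨m, hmX, hmv⟩
      rcases two_edges E (hdeg v) with ⟨i, j, hij, hi, hj, huniq⟩
      have hb' := huniq _ hv1
      have hc' := huniq _ hv2
      have hm' := huniq _ hmv
      rcases hb' with hb' | hb' <;> rcases hc' with hc' | hc' <;> rcases hm' with hm' | hm' <;>
        first
          | (exfalso; exact hne (hb'.trans hc'.symm))
          | (exfalso; exact hbX (hb' ▸ hm' ▸ hmX))
          | exact hc' ▸ hm' ▸ hmX

lemma closed_rtg {S : Finset (Fin k × Bool)}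
    (hcl : ∀ x ∈ S, ∀ y, impStep E lab σ x y → y ∈ S)
    {x y : Fin k × Bool} (h : ReflTransGen (impStep E lab σ) x y) (hx : x ∈ S) : y ∈ S := by
  induction h with
  | refl => exact hx
  | tail _ hstep ih => exact hcl _ ih _ hstep

end Aux

/-- For a degree-2 hypergraph program, there is no independent set of
hyperedges covering all zeros under `σ` iff for some hyperedge `e_i` the
implication graph has directed paths both from `e_i⁻` to `e_i⁺` and from
`e_i⁺` to `e_i⁻`. -/
theorem stmt_12 {V α : Type} [DecidableEq V] {k : ℕ} (E : Fin k → Finset V)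
    (lab : V → HGPLabel α)
    (hdeg : ∀ v : V, (Finset.univ.filter (fun i => v ∈ E i)).card = 2) :
    ∀ σ : α → Bool,
      (¬ ∃ X : Finset (Fin k),
        (∀ i ∈ X, ∀ j ∈ X, i ≠ j → Disjoint (E i) (E j)) ∧
        ∀ v : V, (lab v).eval σ = false → ∃ i ∈ X, v ∈ E i) ↔
      ∃ i : Fin k,
        Relation.ReflTransGen (impStep E lab σ) (i, false) (i, true) ∧
        Relation.ReflTransGen (impStep E lab σ) (i, true) (i, false) := by
  intro σ
  classical
  set R := ReflTransGen (impStep E lab σ) with hRdef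
  constructor
  · intro hno
    by_contra hcyc
    have hc : ∀ i : Fin k, ¬(R (i, false) (i, true) ∧ R (i, true) (i, false)) :=
      fun i h => hcyc ⟨i, h⟩
    apply hno
    -- maximal good set
    set Good : Finset (Fin k × Bool) → Prop := fun S =>
      (∀ x ∈ S, ∀ y, impStep E lab σ x y → y ∈ S) ∧
      ∀ i : Fin k, ¬((i, true) ∈ S ∧ (i, false) ∈ S) with hGood
    have hne : (Finset.univ.filter Good).Nonempty := by
      refine ⟨∅, Finset.mem_filter.mpr ⟨Finset.mem_univ _, ?_, ?_⟩⟩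
      · intro x hx; simp at hx
      · intro i hi; simp at hi
    obtain ⟨S, hSmem, hSmax⟩ : ∃ m ∈ Finset.univ.filter Good,
        ∀ x ∈ Finset.univ.filter Good, ¬m < x := by
      obtain ⟨m, hm⟩ := Finset.exists_maximal hne
      exact ⟨m, hm.1, fun x hx hlt => lt_irrefl _ (lt_of_lt_of_le hlt (hm.2 hx hlt.le))⟩
    have hSgood : Good S := (Finset.mem_filter.mp hSmem).2
    have htot : ∀ i : Fin k, (i, true) ∈ S ∨ (i, false) ∈ S := by
      intro i
      by_contra hni
      push_neg at hni
      obtain ⟨h1, h2⟩ := hni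
      obtain ⟨ℓ, hℓ1, hℓ2⟩ : ∃ ℓ : Fin k × Bool, ℓ.1 = i ∧ ¬ R ℓ (ℓ.1, !ℓ.2) := by
        by_cases h : R (i, true) (i, false)
        · exact ⟨(i, false), rfl, by simpa using fun h' => hc i ⟨h', h⟩⟩
        · exact ⟨(i, true), rfl, by simpa using h⟩
      set S' := S ∪ Finset.univ.filter (fun y => R ℓ y) with hS'
      have hmix : ∀ m : Fin k × Bool, m ∈ S → R ℓ (m.1, !m.2) → False := by
        intro m hm hr
        have hsk := rtg_skew E lab σ hr
        have hmem : (ℓ.1, !ℓ.2) ∈ S :=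
          closed_rtg E lab σ hSgood.1 (by simpa using hsk) hm
        rw [hℓ1] at hmem
        cases hb : ℓ.2 <;> rw [hb] at hmem
        · exact h1 (by simpa using hmem)
        · exact h2 (by simpa using hmem)
      have hgood' : Good S' := by
        constructor
        · intro x hx y hxy
          rcases Finset.mem_union.mp hx with hx | hx
          · exact Finset.mem_union_left _ (hSgood.1 x hx y hxy)
          · have hr : R ℓ x := (Finset.mem_filter.mp hx).2
            exact Finset.mem_union_right _
              (Finset.mem_filter.mpr ⟨Finset.mem_univ _, hr.tail hxy⟩)
        · rintro j ⟨ht, hf⟩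
          rcases Finset.mem_union.mp ht with ht | ht <;>
            rcases Finset.mem_union.mp hf with hf | hf
          · exact hSgood.2 j ⟨ht, hf⟩
          · exact hmix (j, true) ht (by simpa using (Finset.mem_filter.mp hf).2)
          · exact hmix (j, false) hf (by simpa using (Finset.mem_filter.mp ht).2)
          · have r1 : R ℓ (j, true) := (Finset.mem_filter.mp ht).2
            have r2 : R ℓ (j, false) := (Finset.mem_filter.mp hf).2
            have hsk := rtg_skew E lab σ r2
            exact hℓ2 (r1.trans (by simpa using hsk))
      have hℓmem : ℓ ∈ S' :=
        Finset.mem_union_right _ (Finset.mem_filter.mpr ⟨Finset.mem_univ _, ReflTransGen.refl⟩)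
      have hℓS : ℓ ∉ S := by
        intro hmem
        have hmem' : (i, ℓ.2) ∈ S := by rw [← hℓ1]; simpa using hmem
        cases hb : ℓ.2 <;> rw [hb] at hmem'
        · exact h2 hmem'
        · exact h1 hmem'
      have hss : S ⊂ S' :=
        (Finset.ssubset_iff_of_subset Finset.subset_union_left).mpr ⟨ℓ, hℓmem, hℓS⟩
      exact hSmax S' (Finset.mem_filter.mpr ⟨Finset.mem_univ _, hgood'⟩) hss
    refine ⟨Finset.univ.filter (fun j => (j, true) ∈ S), ?_, ?_⟩
    · intro i₁ hi₁ j₁ hj₁ hne₁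
      by_contra hdisj
      rcases Finset.not_disjoint_iff.mp hdisj with ⟨v, hv1, hv2⟩
      have hstep : impStep E lab σ (i₁, true) (j₁, false) :=
        Or.inl ⟨rfl, rfl, hne₁, v, hv1, hv2⟩
      have hmem := hSgood.1 _ (Finset.mem_filter.mp hi₁).2 _ hstep
      exact hSgood.2 j₁ ⟨(Finset.mem_filter.mp hj₁).2, hmem⟩
    · intro v hv
      rcases two_edges E (hdeg v) with ⟨a, b, hab, ha, hb, _⟩
      rcases htot a with h | h
      · exact ⟨a, Finset.mem_filter.mpr ⟨Finset.mem_univ _, h⟩, ha⟩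
      · have hstep : impStep E lab σ (a, false) (b, true) :=
          Or.inr ⟨rfl, rfl, hab, v, ha, hb, hv⟩
        exact ⟨b, Finset.mem_filter.mpr ⟨Finset.mem_univ _, hSgood.1 _ h _ hstep⟩, hb⟩
  · rintro ⟨i, h1, h2⟩ ⟨X, hind, hcov⟩
    by_cases hiX : i ∈ X
    · have := preserve E lab σ X hdeg hind hcov h2 (by simp [hiX])
      simp [hiX] at this
    · have := preserve E lab σ X hdeg hind hcov h1 (by simp [hiX])
      simp [hiX] at this
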